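/- Let K_k and K_ℓ be symmetric 2×2 matrices on a Euclidean plane, with K_ℓ negative semidefinite, and suppose K_k has eigenvalues λ₁ < 0 < λ₂ with |λ₁| > λ₂ and negative unit eigendirection e₁. If the critical angle θ_c = arcsin √(λ₁/(λ₁ − λ₂)) satisfies θ_c > π/4, then there exist orthonormal vectors v₁, v₂ with ⟨v_i, K_k v_i⟩ < 0 and ⟨v_i, K_ℓ v_i⟩ ≤ 0 for i = 1, 2 (take v₁, v₂ at angles ±π/4 from e₁). -/

import Mathlib

open Real Matrix

/-- The quadratic form `v ↦ ⟨v, K v⟩` of a 2×2 matrix on ℝ². -/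
def quadForm (K : Matrix (Fin 2) (Fin 2) ℝ) (v : Fin 2 → ℝ) : ℝ :=
  v ⬝ᵥ K.mulVec v

theorem stmt_12 (Kk Kl : Matrix (Fin 2) (Fin 2) ℝ)
    (hKk : Kk.IsSymm) (hKl : Kl.IsSymm)
    (hKlsemi : ∀ v : Fin 2 → ℝ, quadForm Kl v ≤ 0)
    (l₁ l₂ : ℝ) (hl₁ : l₁ < 0) (hl₂ : 0 < l₂) (habs : |l₁| > l₂)
    (e₁ e₂ : Fin 2 → ℝ)
    (he₁ : e₁ ⬝ᵥ e₁ = 1) (he₂ : e₂ ⬝ᵥ e₂ = 1) (he₁₂ : e₁ ⬝ᵥ e₂ = 0)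
    (hKe₁ : Kk.mulVec e₁ = l₁ • e₁) (hKe₂ : Kk.mulVec e₂ = l₂ • e₂)
    (hangle : Real.arcsin (Real.sqrt (l₁ / (l₁ - l₂))) > π / 4) :
    ∃ v₁ v₂ : Fin 2 → ℝ,
      v₁ ⬝ᵥ v₁ = 1 ∧ v₂ ⬝ᵥ v₂ = 1 ∧ v₁ ⬝ᵥ v₂ = 0 ∧
      quadForm Kk v₁ < 0 ∧ quadForm Kk v₂ < 0 ∧
      quadForm Kl v₁ ≤ 0 ∧ quadForm Kl v₂ ≤ 0 := by
  set a : ℝ := (Real.sqrt 2)⁻¹ with ha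
  have ha2 : a * a = 1 / 2 := by
    rw [ha, ← mul_inv]
    rw [← Real.sqrt_mul_self (by norm_num : (0:ℝ) ≤ 2)]
    norm_num
  have he₂₁ : e₂ ⬝ᵥ e₁ = 0 := by rw [dotProduct_comm]; exact he₁₂
  have hsum : l₁ + l₂ < 0 := by
    rw [abs_of_neg hl₁] at habs; linarith
  refine ⟨a • (e₁ + e₂), a • (e₁ - e₂), ?_, ?_, ?_, ?_, ?_, hKlsemi _, hKlsemi _⟩
  · simp [smul_dotProduct, dotProduct_smul, dotProduct_add, add_dotProduct,
      he₁, he₂, he₁₂, he₂₁, ha2]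
    norm_num
  · simp [smul_dotProduct, dotProduct_smul, dotProduct_sub, sub_dotProduct,
      dotProduct_add, add_dotProduct, he₁, he₂, he₁₂, he₂₁]
    ring_nf
    rw [sq, ha2]; norm_num
  · simp [smul_dotProduct, dotProduct_smul, dotProduct_sub, sub_dotProduct,
      dotProduct_add, add_dotProduct, he₁, he₂, he₁₂, he₂₁]
  · have : quadForm Kk (a • (e₁ + e₂)) = a * a * (l₁ + l₂) := by
      simp [quadForm, Matrix.mulVec_smul, Matrix.mulVec_add, hKe₁, hKe₂,
        smul_dotProduct, dotProduct_smul, dotProduct_add, add_dotProduct,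
        he₁, he₂, he₁₂, he₂₁]
      ring
    rw [this, ha2]; linarith
  · have : quadForm Kk (a • (e₁ - e₂)) = a * a * (l₁ + l₂) := by
      simp [quadForm, Matrix.mulVec_smul, Matrix.mulVec_sub, hKe₁, hKe₂,
        smul_dotProduct, dotProduct_smul, dotProduct_sub, sub_dotProduct,
        he₁, he₂, he₁₂, he₂₁]
      ring
    rw [this, ha2]; linarith
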